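/- Let x₁,…,x₆ ∈ SL(2,ℂ) and define the checked matrices x̌ᵢ = xᵢ - (tr(xᵢ)/2)•1 and s_{i₁⋯i_r} = -tr(x̌_{i₁}⋯x̌_{i_r}). Then for any indices a₁ < a₂ < a₃ and b₁ < b₂ < b₃ (drawn from 1,…,6), 2·s_{a₁a₂a₃}·s_{b₁b₂b₃} equals the determinant of the 3×3 matrix whose (i,j) entry is s_{a_i b_j}. (Type I relation.) -/
import Mathlib


open Matrix

lemma aux_tr0 (x : Fin 6 → Matrix (Fin 2) (Fin 2) ℂ)
    (c : Fin 6 → Matrix (Fin 2) (Fin 2) ℂ)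
    (hc : ∀ i, c i = x i - ((trace (x i)) / 2) • (1 : Matrix (Fin 2) (Fin 2) ℂ))
    (i : Fin 6) : c i 1 1 = - c i 0 0 := by
  simp [hc, Matrix.trace_fin_two, Matrix.sub_apply, Matrix.smul_apply, Matrix.one_apply]
  ring

set_option maxHeartbeats 2000000 in
lemma aux_det (A B C D E F : Matrix (Fin 2) (Fin 2) ℂ)
    (hA : A 1 1 = - A 0 0) (hB : B 1 1 = - B 0 0) (hC : C 1 1 = - C 0 0)
    (hD : D 1 1 = - D 0 0) (hE : E 1 1 = - E 0 0) (hF : F 1 1 = - F 0 0) :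
    2 * (-(trace (A * B * C))) * (-(trace (D * E * F))) =
      (!![-(trace (A * D)), -(trace (A * E)), -(trace (A * F));
          -(trace (B * D)), -(trace (B * E)), -(trace (B * F));
          -(trace (C * D)), -(trace (C * E)), -(trace (C * F))] :
          Matrix (Fin 3) (Fin 3) ℂ).det := by
  rw [Matrix.det_fin_three]
  simp only [Matrix.trace_fin_two, Matrix.mul_apply, Fin.sum_univ_two, Matrix.of_apply,
    Matrix.cons_val', Matrix.cons_val_zero, Matrix.cons_val_one, Matrix.cons_val_two,
    Matrix.head_cons, Matrix.tail_cons, Matrix.head_fin_const, Matrix.empty_val',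
    Matrix.cons_val_fin_one, hA, hB, hC, hD, hE, hF]
  ring

theorem stmt_8 (x : Fin 6 → Matrix (Fin 2) (Fin 2) ℂ)
    (hx : ∀ i, (x i).det = 1)
    (c : Fin 6 → Matrix (Fin 2) (Fin 2) ℂ)
    (hc : ∀ i, c i = x i - ((trace (x i)) / 2) • (1 : Matrix (Fin 2) (Fin 2) ℂ))
    (a₁ a₂ a₃ b₁ b₂ b₃ : Fin 6)
    (ha₁ : a₁ < a₂) (ha₂ : a₂ < a₃) (hb₁ : b₁ < b₂) (hb₂ : b₂ < b₃) :
    2 * (-(trace (c a₁ * c a₂ * c a₃))) * (-(trace (c b₁ * c b₂ * c b₃))) =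
      (!![-(trace (c a₁ * c b₁)), -(trace (c a₁ * c b₂)), -(trace (c a₁ * c b₃));
          -(trace (c a₂ * c b₁)), -(trace (c a₂ * c b₂)), -(trace (c a₂ * c b₃));
          -(trace (c a₃ * c b₁)), -(trace (c a₃ * c b₂)), -(trace (c a₃ * c b₃))] :
          Matrix (Fin 3) (Fin 3) ℂ).det := by
  exact aux_det _ _ _ _ _ _ (aux_tr0 x c hc a₁) (aux_tr0 x c hc a₂) (aux_tr0 x c hc a₃)
    (aux_tr0 x c hc b₁) (aux_tr0 x c hc b₂) (aux_tr0 x c hc b₃)
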